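/- For all real x with 0 < x < π/2, the following double inequality holds: (2 + cos x)/3 − (2/3 − 2/π)·Φ₁(x) < (sin x)/x < (2 + cos x)/3 − (2/3 − 2/π)·Φ₂(x). -/

import Mathlib

open Real Set

/-- helper: if f has derivative f' everywhere, and f' ≥ 0 on [0,∞), then f 0 ≤ f x for x ≥ 0 -/
lemma chr_mono0 {f f' : ℝ → ℝ} (hf : ∀ y, HasDerivAt f (f' y) y)
    (h0 : ∀ y, 0 ≤ y → 0 ≤ f' y) {x : ℝ} (hx : 0 ≤ x) : f 0 ≤ f x := by
  have hm : MonotoneOn f (Ici (0:ℝ)) := by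
    apply monotoneOn_of_deriv_nonneg (convex_Ici 0)
      (fun y _ => (hf y).continuousAt.continuousWithinAt)
      (fun y _ => (hf y).differentiableAt.differentiableWithinAt)
    intro y hy
    rw [(hf y).deriv]
    rw [interior_Ici] at hy
    exact h0 y (le_of_lt hy)
  exact hm self_mem_Ici hx hx

lemma chr_t1 {x : ℝ} (hx : 0 ≤ x) : x - x ^ 3 / 6 ≤ sin x := by
  have h := chr_mono0 (f := fun t => sin t - (t - t ^ 3 / 6))
      (f' := fun t => cos t - (1 - t ^ 2 / 2)) (fun y => ?_) (fun y hy => ?_) hx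
  · simpa using h
  · have h1 : HasDerivAt (fun t : ℝ => t - t ^ 3 / 6) (1 - y ^ 2 / 2) y := by
      have := (hasDerivAt_id y).sub ((hasDerivAt_pow 3 y).div_const 6)
      exact this.congr_deriv (by ring)
    exact (hasDerivAt_sin y).sub h1
  · have := one_sub_sq_div_two_le_cos (x := y)
    linarith

lemma chr_t2 {x : ℝ} (hx : 0 ≤ x) : cos x ≤ 1 - x ^ 2 / 2 + x ^ 4 / 24 := by
  have h := chr_mono0 (f := fun t => (1 - t ^ 2 / 2 + t ^ 4 / 24) - cos t)
      (f' := fun t => (t ^ 3 / 6 - t) + sin t) (fun y => ?_) (fun y hy => ?_) hx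
  · simp at h; linarith
  · have h1 : HasDerivAt (fun t : ℝ => 1 - t ^ 2 / 2 + t ^ 4 / 24) (y ^ 3 / 6 - y) y := by
      have := (((hasDerivAt_pow 2 y).div_const 2).const_sub 1).add ((hasDerivAt_pow 4 y).div_const 24)
      exact this.congr_deriv (by ring)
    have := h1.sub (hasDerivAt_cos y)
    exact this.congr_deriv (by ring)
  · have := chr_t1 hy
    linarith

lemma chr_t3 {x : ℝ} (hx : 0 ≤ x) : sin x ≤ x - x ^ 3 / 6 + x ^ 5 / 120 := by
  have h := chr_mono0 (f := fun t => (t - t ^ 3 / 6 + t ^ 5 / 120) - sin t)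
      (f' := fun t => (1 - t ^ 2 / 2 + t ^ 4 / 24) - cos t) (fun y => ?_) (fun y hy => ?_) hx
  · simp at h; linarith
  · have h1 : HasDerivAt (fun t : ℝ => t - t ^ 3 / 6 + t ^ 5 / 120)
        (1 - y ^ 2 / 2 + y ^ 4 / 24) y := by
      have := ((hasDerivAt_id y).sub ((hasDerivAt_pow 3 y).div_const 6)).add
        ((hasDerivAt_pow 5 y).div_const 120)
      exact this.congr_deriv (by ring)
    exact h1.sub (hasDerivAt_sin y)
  · have := chr_t2 hy
    linarith

lemma chr_t4 {x : ℝ} (hx : 0 ≤ x) : 1 - x ^ 2 / 2 + x ^ 4 / 24 - x ^ 6 / 720 ≤ cos x := by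
  have h := chr_mono0 (f := fun t => cos t - (1 - t ^ 2 / 2 + t ^ 4 / 24 - t ^ 6 / 720))
      (f' := fun t => (t - t ^ 3 / 6 + t ^ 5 / 120) - sin t) (fun y => ?_) (fun y hy => ?_) hx
  · simp at h; linarith
  · have h1 : HasDerivAt (fun t : ℝ => 1 - t ^ 2 / 2 + t ^ 4 / 24 - t ^ 6 / 720)
        (-(y - y ^ 3 / 6 + y ^ 5 / 120)) y := by
      have := ((((hasDerivAt_pow 2 y).div_const 2).const_sub 1).add
        ((hasDerivAt_pow 4 y).div_const 24)).sub ((hasDerivAt_pow 6 y).div_const 720)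
      exact this.congr_deriv (by ring)
    have := (hasDerivAt_cos y).sub h1
    exact this.congr_deriv (by ring)
  · have := chr_t3 hy
    linarith

lemma chr_t5 {x : ℝ} (hx : 0 ≤ x) : x - x ^ 3 / 6 + x ^ 5 / 120 - x ^ 7 / 5040 ≤ sin x := by
  have h := chr_mono0 (f := fun t => sin t - (t - t ^ 3 / 6 + t ^ 5 / 120 - t ^ 7 / 5040))
      (f' := fun t => cos t - (1 - t ^ 2 / 2 + t ^ 4 / 24 - t ^ 6 / 720)) (fun y => ?_)
      (fun y hy => ?_) hx
  · simp at h; linarith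
  · have h1 : HasDerivAt (fun t : ℝ => t - t ^ 3 / 6 + t ^ 5 / 120 - t ^ 7 / 5040)
        (1 - y ^ 2 / 2 + y ^ 4 / 24 - y ^ 6 / 720) y := by
      have := (((hasDerivAt_id y).sub ((hasDerivAt_pow 3 y).div_const 6)).add
        ((hasDerivAt_pow 5 y).div_const 120)).sub ((hasDerivAt_pow 7 y).div_const 5040)
      exact this.congr_deriv (by ring)
    exact (hasDerivAt_sin y).sub h1
  · have := chr_t4 hy
    linarith

lemma chr_t6 {x : ℝ} (hx : 0 ≤ x) :
    cos x ≤ 1 - x ^ 2 / 2 + x ^ 4 / 24 - x ^ 6 / 720 + x ^ 8 / 40320 := by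
  have h := chr_mono0
      (f := fun t => (1 - t ^ 2 / 2 + t ^ 4 / 24 - t ^ 6 / 720 + t ^ 8 / 40320) - cos t)
      (f' := fun t => sin t - (t - t ^ 3 / 6 + t ^ 5 / 120 - t ^ 7 / 5040)) (fun y => ?_)
      (fun y hy => ?_) hx
  · simp at h; linarith
  · have h1 : HasDerivAt
        (fun t : ℝ => 1 - t ^ 2 / 2 + t ^ 4 / 24 - t ^ 6 / 720 + t ^ 8 / 40320)
        (-(y - y ^ 3 / 6 + y ^ 5 / 120 - y ^ 7 / 5040)) y := by
      have := (((((hasDerivAt_pow 2 y).div_const 2).const_sub 1).add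
        ((hasDerivAt_pow 4 y).div_const 24)).sub ((hasDerivAt_pow 6 y).div_const 720)).add
        ((hasDerivAt_pow 8 y).div_const 40320)
      exact this.congr_deriv (by ring)
    have := h1.sub (hasDerivAt_cos y)
    exact this.congr_deriv (by ring)
  · have := chr_t5 hy
    linarith

lemma chr_t7 {x : ℝ} (hx : 0 ≤ x) :
    sin x ≤ x - x ^ 3 / 6 + x ^ 5 / 120 - x ^ 7 / 5040 + x ^ 9 / 362880 := by
  have h := chr_mono0
      (f := fun t => (t - t ^ 3 / 6 + t ^ 5 / 120 - t ^ 7 / 5040 + t ^ 9 / 362880) - sin t)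
      (f' := fun t => (1 - t ^ 2 / 2 + t ^ 4 / 24 - t ^ 6 / 720 + t ^ 8 / 40320) - cos t)
      (fun y => ?_) (fun y hy => ?_) hx
  · simp at h; linarith
  · have h1 : HasDerivAt
        (fun t : ℝ => t - t ^ 3 / 6 + t ^ 5 / 120 - t ^ 7 / 5040 + t ^ 9 / 362880)
        (1 - y ^ 2 / 2 + y ^ 4 / 24 - y ^ 6 / 720 + y ^ 8 / 40320) y := by
      have := ((((hasDerivAt_id y).sub ((hasDerivAt_pow 3 y).div_const 6)).add
        ((hasDerivAt_pow 5 y).div_const 120)).sub ((hasDerivAt_pow 7 y).div_const 5040)).add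
        ((hasDerivAt_pow 9 y).div_const 362880)
      exact this.congr_deriv (by ring)
    exact h1.sub (hasDerivAt_sin y)
  · have := chr_t6 hy
    linarith

/-! ### Polynomial lemmas -/

lemma chr_QA {x : ℝ} (h1 : 0 < x) (h2 : x ≤ 5/4) :
    0 < 329/37500 - x/180 - 329/750000*x^2 + x^3/3780 + 47/4500000*x^4 - x^5/120960 := by
  nlinarith [mul_pos h1 h1, mul_nonneg (mul_nonneg h1.le h1.le) h1.le,
    mul_nonneg (sub_nonneg.2 h2) h1.le, mul_nonneg (mul_nonneg (sub_nonneg.2 h2) h1.le) h1.le,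
    sq_nonneg (x - 5/4), pow_pos h1 4, pow_pos h1 5]

lemma chr_QB {x : ℝ} (h1 : 5/4 ≤ x) (h2 : x ≤ 15708/10000) :
    1053/40000 - x/45 - 351/160000*x^2 + x^3/630 + 117/1600000*x^4 + x^5/40320 < 0 := by
  nlinarith [mul_nonneg (sub_nonneg.2 h1) (sub_nonneg.2 h2),
    mul_nonneg (mul_nonneg (sub_nonneg.2 h1) (sub_nonneg.2 h2)) (sub_nonneg.2 h1),
    mul_nonneg (mul_nonneg (sub_nonneg.2 h1) (sub_nonneg.2 h2)) (sub_nonneg.2 h2),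
    sq_nonneg (x - 7/5)]

lemma chr_R {u : ℝ} (h1 : 0 < u) (h2 : u ≤ 729/400) :
    -1/180 + 213683/75600000*u - 574799/2268000000*u^2 + 378143/30240000000*u^3
      - 9223/30240000000*u^4 + 9223/2540160000000*u^5 < 0 := by
  nlinarith [mul_pos h1 h1, mul_nonneg (sub_nonneg.2 h2) h1.le,
    mul_nonneg (mul_nonneg (sub_nonneg.2 h2) h1.le) h1.le,
    mul_nonneg (sub_nonneg.2 h2) (sub_nonneg.2 h2), pow_pos h1 3, pow_pos h1 4, pow_pos h1 5]

lemma chr_RM {u : ℝ} (h1 : 729/400 ≤ u) (h2 : u ≤ 24675/10000) :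
    0 < -1/45 + 15083/900000*u - 24989/11812500*u^2 + 1537/14400000*u^3
      - 29203/10080000000*u^4 + 1537/40320000000*u^5 := by
  nlinarith [mul_nonneg (sub_nonneg.2 h1) (sub_nonneg.2 h2),
    mul_nonneg (mul_nonneg (sub_nonneg.2 h1) (sub_nonneg.2 h2)) (sub_nonneg.2 h1),
    mul_nonneg (mul_nonneg (sub_nonneg.2 h1) (sub_nonneg.2 h2)) (sub_nonneg.2 h2),
    sq_nonneg (u - 2)]

/-- expanded left small-x polynomial inequality -/
lemma chr_polyA {x : ℝ} (h1 : 0 < x) (h2 : x ≤ 5/4) :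
    ((2 + (1 - x^2/2 + x^4/24 - x^6/720 + x^8/40320))/3
      - 329/6250*(x - (x - x^3/6 + x^5/120 - x^7/5040)))*x
      - (x - x^3/6 + x^5/120 - x^7/5040) < 0 := by
  have hQ := chr_QA h1 h2
  have h4 := mul_pos (pow_pos h1 4) hQ
  nlinarith [h4]

/-- expanded left large-x derivative polynomial inequality -/
lemma chr_polyB {t : ℝ} (h1 : 5/4 ≤ t) (h2 : t ≤ 15708/10000) :
    1053/20000*((t^2/2 - t^4/24 + t^6/720)*t^2) + (t - t^3/6 + t^5/120)/3*t^2
      + ((1 - t^2/2 + t^4/24 - t^6/720 + t^8/40320)*t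
          - (t - t^3/6 + t^5/120 - t^7/5040)) < 0 := by
  have ht0 : (0:ℝ) < t := by linarith
  have hQ := chr_QB h1 h2
  have h4 := mul_neg_of_pos_of_neg (pow_pos ht0 4) hQ
  nlinarith [h4]

/-- expanded right small-x polynomial inequality -/
lemma chr_polyC {x : ℝ} (h1 : 0 < x) (h2 : x ≤ 27/20) :
    (x - x^3/6 + x^5/120 - x^7/5040 + x^9/362880)
      - ((2 + (1 - x^2/2 + x^4/24 - x^6/720))/3
          - 9223/100000*(x - (x - x^3/6 + x^5/120 - x^7/5040))^2)*x < 0 := by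
  have hu1 : 0 < x^2 := pow_pos h1 2
  have hu2 : x^2 ≤ 729/400 := by nlinarith
  have hR := chr_R hu1 hu2
  have h5 := mul_neg_of_pos_of_neg (pow_pos h1 5) hR
  nlinarith [h5]

/-- expanded right large-x derivative polynomial inequality -/
lemma chr_polyD {t : ℝ} (h1 : 27/20 ≤ t) (h2 : t ≤ 15708/10000) :
    0 < 2*(4611/50000)*((t^3/6 - t^5/120)*(t^2/2 - t^4/24 + t^6/720 - t^8/40320))*t^2
      + (t - t^3/6 + t^5/120 - t^7/5040)/3*t^2
      + ((1 - t^2/2 + t^4/24 - t^6/720)*t - (t - t^3/6 + t^5/120)) := by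
  have ht0 : (0:ℝ) < t := by linarith
  have hu1 : 729/400 ≤ t^2 := by nlinarith
  have hu2 : t^2 ≤ 24675/10000 := by nlinarith
  have hR := chr_RM hu1 hu2
  have h5 := mul_pos (pow_pos ht0 5) hR
  nlinarith [h5]

lemma chr_c0_bounds : 329/6250 < (2/3 - 2/π) * (π/2 - 1)⁻¹ ∧
    (2/3 - 2/π) * (π/2 - 1)⁻¹ < 1053/20000 := by
  have hπl : (3.141592:ℝ) < π := pi_gt_d6
  have hπu : π < 3.141593 := pi_lt_d6
  have hπ0 : (0:ℝ) < π := by linarith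
  have ha : (0:ℝ) < π/2 - 1 := by linarith
  have ha' : π/2 - 1 ≠ 0 := ne_of_gt ha
  have hπ' : π ≠ 0 := ne_of_gt hπ0
  set q := (2/3 - 2/π) * (π/2 - 1)⁻¹ with hq
  have hid : q * ((π/2 - 1) * (3*π)) = 2*π - 6 := by
    rw [hq]
    have h1 : (π/2-1) * (π/2-1)⁻¹ = 1 := mul_inv_cancel₀ ha'
    have h2 : π * π⁻¹ = 1 := mul_inv_cancel₀ hπ'
    linear_combination (2*π - 6) * h1 - (2*(π/2-1)*(π/2-1)⁻¹ * 3) * h2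
  have hA : 0 < (π/2 - 1) * (3*π) := by positivity
  constructor
  · nlinarith [hid, hA, mul_pos (sub_pos.2 hπl) (sub_pos.2 hπu)]
  · nlinarith [hid, hA, mul_pos (sub_pos.2 hπl) (sub_pos.2 hπu)]

lemma chr_c1_bounds : 4611/50000 < (2/3 - 2/π) * ((π/2 - 1)⁻¹)^2 ∧
    (2/3 - 2/π) * ((π/2 - 1)⁻¹)^2 < 9223/100000 := by
  have hπl : (3.141592:ℝ) < π := pi_gt_d6
  have hπu : π < 3.141593 := pi_lt_d6
  have hπ0 : (0:ℝ) < π := by linarith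
  have ha : (0:ℝ) < π/2 - 1 := by linarith
  have ha' : π/2 - 1 ≠ 0 := ne_of_gt ha
  have hπ' : π ≠ 0 := ne_of_gt hπ0
  set q := (2/3 - 2/π) * ((π/2 - 1)⁻¹)^2 with hq
  have hid : q * ((π/2 - 1)^2 * (3*π)) = 2*π - 6 := by
    rw [hq]
    have h1 : (π/2-1) * (π/2-1)⁻¹ = 1 := mul_inv_cancel₀ ha'
    have h2 : π * π⁻¹ = 1 := mul_inv_cancel₀ hπ'
    linear_combination (2*π - 6)*((π/2-1)*(π/2-1)⁻¹ + 1) * h1 - 6*((π/2-1)*(π/2-1)⁻¹)^2 * h2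
  have hA : 0 < (π/2 - 1)^2 * (3*π) := by nlinarith
  constructor
  · nlinarith [hid, hA, mul_pos (sub_pos.2 hπl) (sub_pos.2 hπu),
      mul_pos (mul_pos (sub_pos.2 hπl) (sub_pos.2 hπu)) hπ0, sq_nonneg (π - 3.1415925)]
  · nlinarith [hid, hA, mul_pos (sub_pos.2 hπl) (sub_pos.2 hπu),
      mul_pos (mul_pos (sub_pos.2 hπl) (sub_pos.2 hπu)) hπ0, sq_nonneg (π - 3.1415925)]

set_option maxHeartbeats 2000000 in
theorem cusa_huygens_refinement_phi (x : ℝ) (hx : 0 < x) (hx' : x < π / 2) :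
    (2 + cos x) / 3 - (2 / 3 - 2 / π) * ((π / 2 - 1)⁻¹ * (x - sin x)) < sin x / x ∧
    sin x / x < (2 + cos x) / 3 - (2 / 3 - 2 / π) * ((π / 2 - 1)⁻¹ ^ 2 * (x - sin x) ^ 2) := by
  have hπl : (3.141592:ℝ) < π := pi_gt_d6
  have hπu : π < 3.141593 := pi_lt_d6
  have hπ0 : (0:ℝ) < π := by linarith
  have ha : (0:ℝ) < π/2 - 1 := by linarith
  have ha' : π/2 - 1 ≠ 0 := ne_of_gt ha
  have hsx : sin x < x := sin_lt hx
  have hxu : x ≤ 15708/10000 := by linarith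
  obtain ⟨hqlo, hqhi⟩ := chr_c0_bounds
  obtain ⟨hrlo, hrhi⟩ := chr_c1_bounds
  constructor
  · -- LEFT inequality
    have key : (2 + cos x)/3 - ((2/3 - 2/π) * (π/2 - 1)⁻¹)*(x - sin x) < sin x / x := by
      set q : ℝ := (2/3 - 2/π) * (π/2 - 1)⁻¹ with hqdef
      rcases le_or_gt x (5/4) with hc | hc
      · rw [lt_div_iff₀ hx]
        have hS7 := chr_t5 hx.le
        have hC8 := chr_t6 hx.le
        have e1 : ((2 + cos x)/3 - q*(x - sin x))*x ≤ ((2 + cos x)/3 - 329/6250*(x - sin x))*x := by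
          apply mul_le_mul_of_nonneg_right _ hx.le
          have := mul_le_mul_of_nonneg_right hqlo.le (sub_pos.2 hsx).le
          linarith
        have e2 : ((2 + cos x)/3 - 329/6250*(x - sin x))*x - sin x < 0 := by
          have hpoly := chr_polyA hx hc
          nlinarith [mul_nonneg (sub_nonneg.2 hC8) hx.le,
            mul_nonneg (sub_nonneg.2 hS7) (by linarith : (0:ℝ) ≤ 1 - 329/6250*x)]
        linarith
      · -- monotone regime
        set F : ℝ → ℝ := fun t => q*(t - sin t) - (2 + cos t)/3 + sin t/t with hFdef
        have hder : ∀ t : ℝ, 0 < t →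
            HasDerivAt F (q*(1 - cos t) + sin t/3 + (cos t * t - sin t * 1)/t^2) t := by
          intro t ht
          have h1 : HasDerivAt (fun u : ℝ => q*(u - sin u)) (q*(1 - cos t)) t :=
            ((hasDerivAt_id t).sub (hasDerivAt_sin t)).const_mul q
          have h2 : HasDerivAt (fun u : ℝ => (2 + cos u)/3) (-sin t/3) t := by
            have := ((hasDerivAt_cos t).const_add 2).div_const 3
            convert this using 1 <;> try ring
          have h3 : HasDerivAt (fun u : ℝ => sin u / u) ((cos t * t - sin t * 1)/t^2) t :=
            (hasDerivAt_sin t).div (hasDerivAt_id t) (ne_of_gt ht)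
          have h4 := (h1.sub h2).add h3
          exact h4.congr_deriv (by ring)
        have hanti : StrictAntiOn F (Set.Icc x (π/2)) := by
          apply strictAntiOn_of_deriv_neg (convex_Icc _ _)
          · intro t ht
            exact (hder t (lt_of_lt_of_le hx ht.1)).continuousAt.continuousWithinAt
          · intro t ht
            rw [interior_Icc] at ht
            have ht0 : (0:ℝ) < t := lt_trans hx ht.1
            rw [(hder t ht0).deriv]
            have h54 : 5/4 ≤ t := by linarith [ht.1]
            have htu : t ≤ 15708/10000 := by linarith [ht.2]
            have key2 : q*(1 - cos t)*t^2 + sin t/3*t^2 + (cos t * t - sin t * 1) < 0 := by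
              have b0 : (0:ℝ) ≤ 1 - cos t := by linarith [cos_le_one t]
              have b1 : q*(1 - cos t)*t^2 ≤ 1053/20000*((t^2/2 - t^4/24 + t^6/720)*t^2) := by
                have h4 := chr_t4 ht0.le
                have hq2 : q*(1 - cos t) ≤ 1053/20000*(t^2/2 - t^4/24 + t^6/720) := by
                  have := mul_le_mul_of_nonneg_right hqhi.le b0
                  linarith
                have := mul_le_mul_of_nonneg_right hq2 (sq_nonneg t)
                linarith [this]
              have b2 : sin t/3*t^2 ≤ (t - t^3/6 + t^5/120)/3*t^2 := by
                have h3u := chr_t3 ht0.le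
                apply mul_le_mul_of_nonneg_right _ (sq_nonneg t)
                linarith
              have b3 : cos t * t ≤ (1 - t^2/2 + t^4/24 - t^6/720 + t^8/40320)*t :=
                mul_le_mul_of_nonneg_right (chr_t6 ht0.le) ht0.le
              have b4 := chr_t5 ht0.le
              have hpoly := chr_polyB h54 htu
              nlinarith [hpoly, b1, b2, b3, b4]
            have heq : q*(1 - cos t) + sin t/3 + (cos t * t - sin t * 1)/t^2
                = (q*(1 - cos t)*t^2 + sin t/3*t^2 + (cos t * t - sin t * 1))/t^2 := by
              field_simp
            rw [heq]
            exact div_neg_of_neg_of_pos key2 (pow_pos ht0 2)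
        have hlt := hanti ⟨le_rfl, hx'.le⟩ ⟨hx'.le, le_rfl⟩ hx'
        have hend : F (π/2) = 0 := by
          rw [hFdef]
          simp only [sin_pi_div_two, cos_pi_div_two]
          have h1 : (π/2-1) * (π/2-1)⁻¹ = 1 := mul_inv_cancel₀ ha'
          have h3 : (1:ℝ)/(π/2) = 2/π := by
            rw [one_div, inv_div]
          rw [hqdef, h3]
          linear_combination (2/3 - 2/π) * h1
        rw [hend] at hlt
        have hFx : 0 < q*(x - sin x) - (2 + cos x)/3 + sin x/x := hlt
        linarith
    have hrw : (2/3 - 2/π) * ((π/2 - 1)⁻¹ * (x - sin x))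
        = ((2/3 - 2/π) * (π/2 - 1)⁻¹)*(x - sin x) := by ring
    rw [hrw]
    exact key
  · -- RIGHT inequality
    have key : sin x / x < (2 + cos x)/3 - ((2/3 - 2/π) * ((π/2 - 1)⁻¹)^2)*(x - sin x)^2 := by
      set q : ℝ := (2/3 - 2/π) * ((π/2 - 1)⁻¹)^2 with hqdef
      rcases le_or_gt x (27/20) with hc | hc
      · rw [div_lt_iff₀ hx]
        have hS7 := chr_t5 hx.le
        have hS9 := chr_t7 hx.le
        have hC6 := chr_t4 hx.le
        have e1 : q*(x - sin x)^2 ≤ 9223/100000*(x - (x - x^3/6 + x^5/120 - x^7/5040))^2 := by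
          have h1 : (x - sin x)^2 ≤ (x - (x - x^3/6 + x^5/120 - x^7/5040))^2 := by
            apply pow_le_pow_left₀ (sub_nonneg.2 hsx.le) (by linarith) 2
          calc q*(x - sin x)^2 ≤ 9223/100000*(x - sin x)^2 :=
                mul_le_mul_of_nonneg_right hrhi.le (sq_nonneg _)
            _ ≤ 9223/100000*(x - (x - x^3/6 + x^5/120 - x^7/5040))^2 := by linarith
        have hpoly := chr_polyC hx hc
        nlinarith [hpoly, hS9, e1, mul_nonneg (sub_nonneg.2 hC6) hx.le,
          mul_nonneg (sub_nonneg.2 e1) hx.le]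
      · -- monotone regime
        set G : ℝ → ℝ := fun t => q*(t - sin t)^2 - (2 + cos t)/3 + sin t/t with hGdef
        have hder : ∀ t : ℝ, 0 < t →
            HasDerivAt G (q*(2*(t - sin t)^1*(1 - cos t)) + sin t/3 + (cos t * t - sin t * 1)/t^2) t := by
          intro t ht
          have h0 : HasDerivAt (fun u : ℝ => u - sin u) (1 - cos t) t :=
            (hasDerivAt_id t).sub (hasDerivAt_sin t)
          have h1 : HasDerivAt (fun u : ℝ => q*(u - sin u)^2)
              (q*(2*(t - sin t)^1*(1 - cos t))) t := (h0.pow 2).const_mul q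
          have h2 : HasDerivAt (fun u : ℝ => (2 + cos u)/3) (-sin t/3) t := by
            have := ((hasDerivAt_cos t).const_add 2).div_const 3
            convert this using 1 <;> try ring
          have h3 : HasDerivAt (fun u : ℝ => sin u / u) ((cos t * t - sin t * 1)/t^2) t :=
            (hasDerivAt_sin t).div (hasDerivAt_id t) (ne_of_gt ht)
          have h4 := (h1.sub h2).add h3
          exact h4.congr_deriv (by ring)
        have hq0 : (0:ℝ) < q := by linarith
        have hmono : StrictMonoOn G (Set.Icc x (π/2)) := by
          apply strictMonoOn_of_deriv_pos (convex_Icc _ _)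
          · intro t ht
            exact (hder t (lt_of_lt_of_le hx ht.1)).continuousAt.continuousWithinAt
          · intro t ht
            rw [interior_Icc] at ht
            have ht0 : (0:ℝ) < t := lt_trans hx ht.1
            rw [(hder t ht0).deriv]
            have h27 : 27/20 ≤ t := by linarith [ht.1]
            have htu : t ≤ 15708/10000 := by linarith [ht.2]
            have key2 : 0 < q*(2*(t - sin t)^1*(1 - cos t))*t^2 + sin t/3*t^2
                + (cos t * t - sin t * 1) := by
              have ht2 : t^2 ≤ 247/100 := by nlinarith
              have p1 : (0:ℝ) ≤ t^3/6 - t^5/120 := by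
                have hin : (0:ℝ) ≤ 1/6 - t^2/120 := by linarith
                nlinarith [mul_nonneg (mul_nonneg (mul_nonneg ht0.le ht0.le) ht0.le) hin]
              have p2 : (0:ℝ) ≤ t^2/2 - t^4/24 + t^6/720 - t^8/40320 := by
                have hin : (0:ℝ) ≤ 1/2 - t^2/24 + t^4/720 - t^6/40320 := by
                  nlinarith [ht2, mul_nonneg (sub_nonneg.2 ht2) (sq_nonneg t),
                    mul_nonneg (mul_nonneg (sub_nonneg.2 ht2) (sq_nonneg t)) (sq_nonneg t),
                    sq_nonneg (t*t)]
                nlinarith [mul_nonneg (sq_nonneg t) hin]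
              have p3 : t^3/6 - t^5/120 ≤ t - sin t := by linarith [chr_t3 ht0.le]
              have p4 : t^2/2 - t^4/24 + t^6/720 - t^8/40320 ≤ 1 - cos t := by
                linarith [chr_t6 ht0.le]
              have hA : (t^3/6 - t^5/120)*(t^2/2 - t^4/24 + t^6/720 - t^8/40320)
                  ≤ (t - sin t)*(1 - cos t) := by
                apply mul_le_mul p3 p4 p2 (by linarith)
              have hAA : (0:ℝ) ≤ (t^3/6 - t^5/120)*(t^2/2 - t^4/24 + t^6/720 - t^8/40320) :=
                mul_nonneg p1 p2
              have s2 : 2*((t^3/6 - t^5/120)*(t^2/2 - t^4/24 + t^6/720 - t^8/40320))*t^2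
                  ≤ 2*((t - sin t)*(1 - cos t))*t^2 := by
                apply mul_le_mul_of_nonneg_right _ (sq_nonneg t)
                linarith
              have s3 : (0:ℝ) ≤ 2*((t^3/6 - t^5/120)*(t^2/2 - t^4/24 + t^6/720 - t^8/40320))*t^2 :=
                mul_nonneg (by linarith) (sq_nonneg t)
              have s4 : 4611/50000*(2*((t^3/6 - t^5/120)*(t^2/2 - t^4/24 + t^6/720 - t^8/40320))*t^2)
                  ≤ q*(2*((t - sin t)*(1 - cos t))*t^2) :=
                mul_le_mul hrlo.le s2 s3 hq0.le
              have b2 : (t - t^3/6 + t^5/120 - t^7/5040)/3*t^2 ≤ sin t/3*t^2 := by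
                apply mul_le_mul_of_nonneg_right _ (sq_nonneg t)
                linarith [chr_t5 ht0.le]
              have b3 : (1 - t^2/2 + t^4/24 - t^6/720)*t ≤ cos t * t :=
                mul_le_mul_of_nonneg_right (chr_t4 ht0.le) ht0.le
              have b4 := chr_t3 ht0.le
              have hpoly := chr_polyD h27 htu
              nlinarith [hpoly, s4, b2, b3, b4]
            have heq : q*(2*(t - sin t)^1*(1 - cos t)) + sin t/3 + (cos t * t - sin t * 1)/t^2
                = (q*(2*(t - sin t)^1*(1 - cos t))*t^2 + sin t/3*t^2 + (cos t * t - sin t * 1))/t^2 := by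
              field_simp
            rw [heq]
            exact div_pos key2 (pow_pos ht0 2)
        have hlt := hmono ⟨le_rfl, hx'.le⟩ ⟨hx'.le, le_rfl⟩ hx'
        have hend : G (π/2) = 0 := by
          rw [hGdef]
          simp only [sin_pi_div_two, cos_pi_div_two]
          have h1 : (π/2-1) * (π/2-1)⁻¹ = 1 := mul_inv_cancel₀ ha'
          have h3 : (1:ℝ)/(π/2) = 2/π := by
            rw [one_div, inv_div]
          rw [hqdef, h3]
          linear_combination (2/3 - 2/π)*((π/2-1)*(π/2-1)⁻¹ + 1) * h1
        rw [hend] at hlt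
        have hGx : q*(x - sin x)^2 - (2 + cos x)/3 + sin x/x < 0 := hlt
        linarith
    have hrw : (2/3 - 2/π) * ((π/2 - 1)⁻¹^2 * (x - sin x)^2)
        = ((2/3 - 2/π) * ((π/2 - 1)⁻¹)^2)*(x - sin x)^2 := by ring
    rw [hrw]
    exact key
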